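/- Completeness of the parameter estimation test: if the tolerance is set to δ^tol_PE = 2√(log(n/ε_c)·Σᵢ γᵢcᵢ²/n) + (3D/n)·log(2/ε_c) with the quantities γᵢ, cᵢ, D computed from the honest distribution p₀ and the affine coefficients of f^PE, then in an honest i.i.d. implementation, the probability that |f^PE(freq_{c₁ⁿ}) − f^PE(p₀)| > δ^tol_PE is at most ε_c; hence the probability of aborting at parameter estimation is at most ε_c. -/

import Mathlib

open Finset

noncomputable section

open scoped Classical in
/-- Probability of an event for `n` i.i.d. samples from a distribution on a finite
alphabet. -/
noncomputable def iidPr {K n : ℕ} (π : Fin (K + 1) → ℝ)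
    (A : (Fin n → Fin (K + 1)) → Prop) : ℝ :=
  ∑ ω ∈ Finset.univ.filter (fun ω => A ω), ∏ i, π (ω i)

/-- Empirical frequency of symbol `c` among the samples `ω`. -/
noncomputable def freq {K n : ℕ} (ω : Fin n → Fin (K + 1)) (c : Fin (K + 1)) : ℝ :=
  (Finset.univ.filter (fun j => ω j = c)).card / (n : ℝ)

/-- `γᵢ = πᵢ(1 − Σ_{j≤i}πⱼ)/(1 − Σ_{j<i}πⱼ)`. -/
noncomputable def gammaCoef {K : ℕ} (π : Fin (K + 1) → ℝ) (i : Fin K) : ℝ :=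
  π i.castSucc * (1 - ∑ j ∈ Finset.univ.filter (fun j => j ≤ i.castSucc), π j) /
    (1 - ∑ j ∈ Finset.univ.filter (fun j => j < i.castSucc), π j)

/-- `cᵢ = hᵢ − (Σ_{j>i} hⱼπⱼ)/(1 − Σ_{j≤i}πⱼ)`. -/
noncomputable def cCoef {K : ℕ} (π h : Fin (K + 1) → ℝ) (i : Fin K) : ℝ :=
  h i.castSucc - (∑ j ∈ Finset.univ.filter (fun j => i.castSucc < j), h j * π j) /
    (1 - ∑ j ∈ Finset.univ.filter (fun j => j ≤ i.castSucc), π j)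

/-- `D = max_{i,j}|hᵢ − hⱼ|`. -/
noncomputable def Dspread {K : ℕ} (h : Fin (K + 1) → ℝ) : ℝ :=
  Finset.univ.sup' Finset.univ_nonempty
    (fun p : Fin (K + 1) × Fin (K + 1) => |h p.1 - h p.2|)

/-- The affine parameter-estimation statistic `f^PE(p) = Σ_a h_a p(a)`. -/
noncomputable def fPE {K : ℕ} (h : Fin (K + 1) → ℝ) (p : Fin (K + 1) → ℝ) : ℝ :=
  ∑ a, h a * p a

/-- The tolerance parameter
`δ^tol_PE = 2√(log(n/ε_c)·Σᵢ γᵢcᵢ²/n) + (3D/n)·log(2/ε_c)`. -/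
noncomputable def deltaTolPE {K : ℕ} (n : ℕ) (p0 h : Fin (K + 1) → ℝ) (εc : ℝ) : ℝ :=
  2 * Real.sqrt (Real.logb 2 ((n : ℝ) / εc) *
      ∑ i : Fin K, gammaCoef p0 i * (cCoef p0 h i) ^ 2 / (n : ℝ)) +
    (3 * Dspread h / (n : ℝ)) * Real.logb 2 (2 / εc)

/-! ### Auxiliary lemmas -/

lemma sum_pi_prod {A : Type*} [Fintype A] [DecidableEq A] (n : ℕ) (g : A → ℝ) :
    ∑ ω : Fin n → A, ∏ j, g (ω j) = (∑ a, g a) ^ n := by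
  rw [show ((∑ a, g a) ^ n) = ∏ _j : Fin n, ∑ a, g a by rw [Finset.prod_const]; simp]
  rw [Finset.prod_univ_sum]
  simp [Fintype.piFinset_univ]

lemma exp_le_quad {x : ℝ} (hx : x ≤ 1) : Real.exp x ≤ 1 + x + x ^ 2 := by
  rcases le_or_gt (-1) x with h1 | h1
  · have habs : |x| ≤ 1 := abs_le.mpr ⟨h1, hx⟩
    have := Real.exp_bound habs (n := 2) (by norm_num)
    have h2 : |Real.exp x - (1 + x)| ≤ |x| ^ 2 * (3 / 4) := by
      convert this using 2
      · simp [Finset.sum_range_succ]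
      · norm_num
    have h3 : Real.exp x - (1 + x) ≤ |x| ^ 2 * (3 / 4) := (abs_le.mp h2).2
    have h4 : |x| ^ 2 = x ^ 2 := sq_abs x
    nlinarith [sq_nonneg x]
  · have h2 : Real.exp x < 1 := by
      rw [← Real.exp_zero]; exact Real.exp_lt_exp.mpr (by linarith)
    nlinarith

lemma mgf_bound {A : Type*} [Fintype A] (π g : A → ℝ) (hπ0 : ∀ a, 0 ≤ π a)
    (hπ1 : ∑ a, π a = 1) (lam : ℝ)
    (hb : ∀ a, lam * (g a - ∑ b, π b * g b) ≤ 1) :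
    ∑ a, π a * Real.exp (lam * (g a - ∑ b, π b * g b)) ≤
      Real.exp (lam ^ 2 * ∑ a, π a * (g a - ∑ b, π b * g b) ^ 2) := by
  set μ := ∑ b, π b * g b with hμ
  have step1 : ∑ a, π a * Real.exp (lam * (g a - μ)) ≤
      ∑ a, π a * (1 + lam * (g a - μ) + (lam * (g a - μ)) ^ 2) := by
    apply Finset.sum_le_sum
    intro a _
    exact mul_le_mul_of_nonneg_left (exp_le_quad (hb a)) (hπ0 a)
  have hzero : ∑ a, π a * (g a - μ) = 0 := by
    simp only [mul_sub]
    rw [Finset.sum_sub_distrib, ← Finset.sum_mul, hπ1, one_mul]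
    exact sub_eq_zero.mpr hμ.symm
  have step2 : ∑ a, π a * (1 + lam * (g a - μ) + (lam * (g a - μ)) ^ 2) =
      1 + lam ^ 2 * ∑ a, π a * (g a - μ) ^ 2 := by
    have : ∀ a, π a * (1 + lam * (g a - μ) + (lam * (g a - μ)) ^ 2) =
        π a + lam * (π a * (g a - μ)) + lam ^ 2 * (π a * (g a - μ) ^ 2) := by
      intro a; ring
    rw [Finset.sum_congr rfl (fun a _ => this a)]
    rw [Finset.sum_add_distrib, Finset.sum_add_distrib, ← Finset.mul_sum, ← Finset.mul_sum,
      hπ1, hzero, mul_zero, add_zero]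
  calc ∑ a, π a * Real.exp (lam * (g a - μ))
      ≤ 1 + lam ^ 2 * ∑ a, π a * (g a - μ) ^ 2 := step1.trans (le_of_eq step2)
    _ ≤ Real.exp (lam ^ 2 * ∑ a, π a * (g a - μ) ^ 2) := by
        have := Real.add_one_le_exp (lam ^ 2 * ∑ a, π a * (g a - μ) ^ 2)
        linarith

set_option maxHeartbeats 2000000 in
lemma chernoff {K n : ℕ} (π : Fin (K + 1) → ℝ) (hπ0 : ∀ a, 0 ≤ π a)
    (hπ1 : ∑ a, π a = 1) (g : Fin (K + 1) → ℝ) (lam δ : ℝ) (hlam : 0 ≤ lam)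
    (hb : ∀ a, lam * (g a - ∑ b, π b * g b) ≤ 1) :
    iidPr (n := n) π (fun ω => (n : ℝ) * (∑ b, π b * g b) + (n : ℝ) * δ < ∑ j, g (ω j)) ≤
      Real.exp ((n : ℝ) * (lam ^ 2 * (∑ a, π a * (g a - ∑ b, π b * g b) ^ 2) - lam * δ)) := by
  classical
  set μ := ∑ b, π b * g b with hμ
  set v := ∑ a, π a * (g a - μ) ^ 2 with hv
  set F : Fin (K + 1) → ℝ := fun a => π a * Real.exp (lam * (g a - μ)) with hF
  have hFnn : ∀ a, 0 ≤ F a := fun a => mul_nonneg (hπ0 a) (Real.exp_pos _).le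
  have key : ∀ ω : Fin n → Fin (K + 1),
      (∏ i, π (ω i)) * Real.exp (lam * ((∑ j, g (ω j)) - ((n : ℝ) * μ + (n : ℝ) * δ))) =
        Real.exp (-(lam * ((n : ℝ) * δ))) * ∏ i, F (ω i) := by
    intro ω
    have h1 : lam * ((∑ j, g (ω j)) - ((n : ℝ) * μ + (n : ℝ) * δ)) =
        (∑ j, lam * (g (ω j) - μ)) + (-(lam * ((n : ℝ) * δ))) := by
      rw [← Finset.mul_sum]
      have : ∑ j : Fin n, (g (ω j) - μ) = (∑ j, g (ω j)) - (n : ℝ) * μ := by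
        rw [Finset.sum_sub_distrib]
        simp [Finset.sum_const, mul_comm]
      rw [this]; ring
    rw [h1, Real.exp_add, Real.exp_sum]
    rw [hF]
    rw [Finset.prod_mul_distrib]
    ring
  unfold iidPr
  refine le_trans (Finset.sum_le_sum (g := fun ω => (∏ i, π (ω i)) *
      Real.exp (lam * ((∑ j, g (ω j)) - ((n : ℝ) * μ + (n : ℝ) * δ)))) ?_) ?_
  · intro ω hω
    rw [Finset.mem_filter] at hω
    have h2 : (1 : ℝ) ≤ Real.exp (lam * ((∑ j, g (ω j)) - ((n : ℝ) * μ + (n : ℝ) * δ))) := by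
      rw [← Real.exp_zero]
      apply Real.exp_le_exp.mpr
      have := hω.2
      have h3 : 0 ≤ (∑ j, g (ω j)) - ((n : ℝ) * μ + (n : ℝ) * δ) := by linarith
      positivity
    have goal' : ∏ i, π (ω i) ≤ (∏ i, π (ω i)) *
        Real.exp (lam * ((∑ j, g (ω j)) - ((n : ℝ) * μ + (n : ℝ) * δ))) := by
      nlinarith [Finset.prod_nonneg (fun i (_ : i ∈ Finset.univ) => hπ0 (ω i))]
    exact goal'
  refine le_trans (Finset.sum_le_sum_of_subset_of_nonneg (Finset.filter_subset _ _) ?_) ?_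
  · intro ω _ _
    exact mul_nonneg (Finset.prod_nonneg (fun i _ => hπ0 (ω i))) (Real.exp_pos _).le
  have heq : ∑ ω : Fin n → Fin (K + 1),
      (∏ i, π (ω i)) * Real.exp (lam * ((∑ j, g (ω j)) - ((n : ℝ) * μ + (n : ℝ) * δ))) =
      Real.exp (-(lam * ((n : ℝ) * δ))) * (∑ a, F a) ^ n := by
    rw [Finset.sum_congr rfl (fun ω _ => key ω), ← Finset.mul_sum, sum_pi_prod]
  rw [heq]
  have h4 : (∑ a, F a) ^ n ≤ Real.exp (lam ^ 2 * v) ^ n := by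
    apply pow_le_pow_left₀ (Finset.sum_nonneg (fun a _ => hFnn a))
    exact mgf_bound π g hπ0 hπ1 lam hb
  calc Real.exp (-(lam * ((n : ℝ) * δ))) * (∑ a, F a) ^ n
      ≤ Real.exp (-(lam * ((n : ℝ) * δ))) * Real.exp (lam ^ 2 * v) ^ n :=
        mul_le_mul_of_nonneg_left h4 (Real.exp_pos _).le
    _ = Real.exp ((n : ℝ) * (lam ^ 2 * v - lam * δ)) := by
        rw [← Real.exp_nat_mul, ← Real.exp_add]
        congr 1
        ring

lemma iidPr_nonneg {K n : ℕ} (π : Fin (K + 1) → ℝ) (hπ0 : ∀ a, 0 ≤ π a)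
    (A : (Fin n → Fin (K + 1)) → Prop) : 0 ≤ iidPr π A := by
  unfold iidPr
  exact Finset.sum_nonneg (fun ω _ => Finset.prod_nonneg (fun i _ => hπ0 (ω i)))

lemma iidPr_mono {K n : ℕ} (π : Fin (K + 1) → ℝ) (hπ0 : ∀ a, 0 ≤ π a)
    {A B : (Fin n → Fin (K + 1)) → Prop} (himp : ∀ ω, A ω → B ω) :
    iidPr π A ≤ iidPr π B := by
  unfold iidPr
  apply Finset.sum_le_sum_of_subset_of_nonneg
  · intro ω hω
    simp only [Finset.mem_filter] at *
    exact ⟨hω.1, himp ω hω.2⟩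
  · intro ω _ _
    exact Finset.prod_nonneg (fun i _ => hπ0 (ω i))

lemma iidPr_eq_zero {K n : ℕ} (π : Fin (K + 1) → ℝ)
    {A : (Fin n → Fin (K + 1)) → Prop} (hA : ∀ ω, ¬ A ω) : iidPr π A = 0 := by
  classical
  unfold iidPr
  rw [Finset.filter_false_of_mem (fun ω _ => hA ω)]
  simp

open scoped Classical in
lemma iidPr_union {K n : ℕ} (π : Fin (K + 1) → ℝ) (hπ0 : ∀ a, 0 ≤ π a)
    (A B : (Fin n → Fin (K + 1)) → Prop) :
    iidPr π (fun ω => A ω ∨ B ω) ≤ iidPr π A + iidPr π B := by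
  unfold iidPr
  have hsub : (@Finset.filter _ (fun ω : Fin n → Fin (K + 1) => A ω ∨ B ω)
        (fun ω => Classical.propDecidable _) Finset.univ) ⊆
      Finset.univ.filter (fun ω => A ω) ∪ Finset.univ.filter (fun ω => B ω) := by
    intro ω hω
    simp only [Finset.mem_filter, Finset.mem_union] at *
    tauto
  refine le_trans (Finset.sum_le_sum_of_subset_of_nonneg hsub ?_) ?_
  · intro ω _ _
    exact Finset.prod_nonneg (fun i _ => hπ0 (ω i))
  have h1 := Finset.sum_union_inter (s₁ := Finset.univ.filter (fun ω : Fin n → Fin (K + 1) => A ω))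
    (s₂ := Finset.univ.filter (fun ω => B ω)) (f := fun ω => ∏ i, π (ω i))
  have h2 : 0 ≤ ∑ ω ∈ (Finset.univ.filter (fun ω : Fin n → Fin (K + 1) => A ω)) ∩
      (Finset.univ.filter (fun ω => B ω)), ∏ i, π (ω i) :=
    Finset.sum_nonneg (fun ω _ => Finset.prod_nonneg (fun i _ => hπ0 (ω i)))
  linarith

lemma fPE_freq {K n : ℕ} (h : Fin (K + 1) → ℝ) (ω : Fin n → Fin (K + 1)) :
    fPE h (freq ω) = (∑ j, h (ω j)) / (n : ℝ) := by
  classical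
  unfold fPE freq
  rw [← Finset.sum_fiberwise Finset.univ ω (fun j => h (ω j))]
  rw [Finset.sum_div]
  apply Finset.sum_congr rfl
  intro a _
  have : ∑ j ∈ Finset.univ.filter (fun j => ω j = a), h (ω j) =
      ∑ j ∈ Finset.univ.filter (fun j => ω j = a), h a := by
    apply Finset.sum_congr rfl
    intro j hj
    rw [(Finset.mem_filter.mp hj).2]
  rw [this, Finset.sum_const, nsmul_eq_mul]
  ring

lemma freq_nonneg {K n : ℕ} (ω : Fin n → Fin (K + 1)) (c : Fin (K + 1)) :
    0 ≤ freq ω c := by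
  unfold freq; positivity

lemma freq_sum {K n : ℕ} (hn : 0 < n) (ω : Fin n → Fin (K + 1)) :
    ∑ c, freq ω c = 1 := by
  classical
  unfold freq
  rw [← Finset.sum_div]
  rw [show ∑ c, ((Finset.univ.filter (fun j => ω j = c)).card : ℝ) =
      ∑ c : Fin (K + 1), ∑ j ∈ Finset.univ.filter (fun j => ω j = c), (1 : ℝ) by
    apply Finset.sum_congr rfl; intro c _; rw [Finset.sum_const, nsmul_eq_mul, mul_one]]
  rw [Finset.sum_fiberwise Finset.univ ω (fun _ => (1 : ℝ))]
  simp
  omega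

lemma fPE_bounds {K : ℕ} (h q : Fin (K + 1) → ℝ) (hq0 : ∀ a, 0 ≤ q a)
    (hq1 : ∑ a, q a = 1) :
    Finset.univ.inf' Finset.univ_nonempty h ≤ fPE h q ∧
      fPE h q ≤ Finset.univ.sup' Finset.univ_nonempty h := by
  constructor
  · unfold fPE
    calc Finset.univ.inf' Finset.univ_nonempty h
        = ∑ a, Finset.univ.inf' Finset.univ_nonempty h * q a := by
          rw [← Finset.mul_sum, hq1, mul_one]
      _ ≤ ∑ a, h a * q a := by
          apply Finset.sum_le_sum
          intro a _
          exact mul_le_mul_of_nonneg_right (Finset.inf'_le _ (Finset.mem_univ a)) (hq0 a)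
  · unfold fPE
    calc ∑ a, h a * q a
        ≤ ∑ a, Finset.univ.sup' Finset.univ_nonempty h * q a := by
          apply Finset.sum_le_sum
          intro a _
          exact mul_le_mul_of_nonneg_right (Finset.le_sup' _ (Finset.mem_univ a)) (hq0 a)
      _ = Finset.univ.sup' Finset.univ_nonempty h := by
          rw [← Finset.mul_sum, hq1, mul_one]

lemma fPE_diff_le {K : ℕ} (h q p : Fin (K + 1) → ℝ) (hq0 : ∀ a, 0 ≤ q a)
    (hq1 : ∑ a, q a = 1) (hp0 : ∀ a, 0 ≤ p a) (hp1 : ∑ a, p a = 1) :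
    |fPE h q - fPE h p| ≤ Dspread h := by
  obtain ⟨a, _, ha⟩ := Finset.exists_mem_eq_sup' (Finset.univ_nonempty (α := Fin (K + 1))) h
  obtain ⟨b, _, hb⟩ := Finset.exists_mem_eq_inf' (Finset.univ_nonempty (α := Fin (K + 1))) h
  have h1 := fPE_bounds h q hq0 hq1
  have h2 := fPE_bounds h p hp0 hp1
  have h3 : Finset.univ.sup' Finset.univ_nonempty h -
      Finset.univ.inf' Finset.univ_nonempty h ≤ Dspread h := by
    unfold Dspread
    rw [ha, hb]
    refine le_trans (le_abs_self _) ?_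
    exact Finset.le_sup' (f := fun p : Fin (K + 1) × Fin (K + 1) => |h p.1 - h p.2|)
      (Finset.mem_univ (a, b))
  rw [abs_le]
  constructor <;> linarith [h1.1, h1.2, h2.1, h2.2]

lemma Dspread_nonneg {K : ℕ} (h : Fin (K + 1) → ℝ) : 0 ≤ Dspread h := by
  unfold Dspread
  refine le_trans (abs_nonneg (h 0 - h 0)) ?_
  exact Finset.le_sup' (f := fun p : Fin (K + 1) × Fin (K + 1) => |h p.1 - h p.2|)
    (Finset.mem_univ (0, 0))

lemma abs_sub_le_Dspread {K : ℕ} (h : Fin (K + 1) → ℝ) (a b : Fin (K + 1)) :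
    |h a - h b| ≤ Dspread h := by
  unfold Dspread
  exact Finset.le_sup' (f := fun p : Fin (K + 1) × Fin (K + 1) => |h p.1 - h p.2|)
    (Finset.mem_univ (a, b))

lemma sub_mean_le {K : ℕ} (π g : Fin (K + 1) → ℝ) (hπ0 : ∀ a, 0 ≤ π a)
    (hπ1 : ∑ a, π a = 1) (D : ℝ) (hD : ∀ a b, g a - g b ≤ D) (a : Fin (K + 1)) :
    g a - ∑ b, π b * g b ≤ D := by
  have h1 : g a - ∑ b, π b * g b = ∑ b, π b * (g a - g b) := by
    simp only [mul_sub]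
    rw [Finset.sum_sub_distrib, ← Finset.sum_mul, hπ1, one_mul]
  rw [h1]
  calc ∑ b, π b * (g a - g b) ≤ ∑ b, π b * D := by
        apply Finset.sum_le_sum
        intro b _
        exact mul_le_mul_of_nonneg_left (hD a b) (hπ0 b)
    _ = D := by rw [← Finset.sum_mul, hπ1, one_mul]

section VarId
variable {K : ℕ} (p0 h : Fin (K + 1) → ℝ)

/-- tail sum of `f` from `m` on. -/
noncomputable def tailSum (f : Fin (K + 1) → ℝ) (m : ℕ) : ℝ :=
  ∑ j ∈ Finset.univ.filter (fun j : Fin (K + 1) => m ≤ (j : ℕ)), f j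

lemma tailSum_zero (f : Fin (K + 1) → ℝ) : tailSum f 0 = ∑ j, f j := by
  unfold tailSum
  rw [Finset.filter_true_of_mem (fun j _ => Nat.zero_le _)]

lemma tailSum_last (f : Fin (K + 1) → ℝ) : tailSum f K = f (Fin.last K) := by
  unfold tailSum
  have : Finset.univ.filter (fun j : Fin (K + 1) => K ≤ (j : ℕ)) = {Fin.last K} := by
    ext j
    simp only [Finset.mem_filter, Finset.mem_univ, true_and, Finset.mem_singleton]
    constructor
    · intro hj
      have := j.isLt
      have : (j : ℕ) = K := le_antisymm (Nat.lt_succ_iff.mp j.isLt) hj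
      exact Fin.ext this
    · intro hj; subst hj; simp [Fin.last]
  rw [this, Finset.sum_singleton]

lemma tailSum_succ (f : Fin (K + 1) → ℝ) (i : Fin K) :
    tailSum f (i : ℕ) = f i.castSucc + tailSum f ((i : ℕ) + 1) := by
  unfold tailSum
  have hsplit : Finset.univ.filter (fun j : Fin (K + 1) => (i : ℕ) ≤ (j : ℕ)) =
      insert i.castSucc (Finset.univ.filter (fun j : Fin (K + 1) => (i : ℕ) + 1 ≤ (j : ℕ))) := by
    ext j
    simp only [Finset.mem_filter, Finset.mem_univ, true_and, Finset.mem_insert]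
    constructor
    · intro hj
      rcases eq_or_lt_of_le hj with h1 | h1
      · left; exact Fin.ext h1.symm
      · right; omega
    · rintro (rfl | hj)
      · simp
      · omega
  rw [hsplit, Finset.sum_insert]
  simp only [Finset.mem_filter, Finset.mem_univ, true_and]
  simp [Fin.coe_castSucc]

lemma one_sub_le_filter (hp1 : ∑ i, p0 i = 1) (i : Fin K) :
    1 - ∑ j ∈ Finset.univ.filter (fun j => j ≤ i.castSucc), p0 j =
      tailSum p0 ((i : ℕ) + 1) := by
  have hsplit := Finset.sum_filter_add_sum_filter_not Finset.univ
    (fun j : Fin (K + 1) => j ≤ i.castSucc) p0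
  rw [hp1] at hsplit
  have : Finset.univ.filter (fun j : Fin (K + 1) => ¬ j ≤ i.castSucc) =
      Finset.univ.filter (fun j : Fin (K + 1) => (i : ℕ) + 1 ≤ (j : ℕ)) := by
    apply Finset.filter_congr
    intro j _
    rw [Fin.le_def]
    simp only [Fin.coe_castSucc]
    omega
  rw [this] at hsplit
  unfold tailSum
  linarith

lemma one_sub_lt_filter (hp1 : ∑ i, p0 i = 1) (i : Fin K) :
    1 - ∑ j ∈ Finset.univ.filter (fun j => j < i.castSucc), p0 j =
      tailSum p0 (i : ℕ) := by
  have hsplit := Finset.sum_filter_add_sum_filter_not Finset.univ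
    (fun j : Fin (K + 1) => j < i.castSucc) p0
  rw [hp1] at hsplit
  have : Finset.univ.filter (fun j : Fin (K + 1) => ¬ j < i.castSucc) =
      Finset.univ.filter (fun j : Fin (K + 1) => (i : ℕ) ≤ (j : ℕ)) := by
    apply Finset.filter_congr
    intro j _
    rw [Fin.lt_def]
    simp only [Fin.coe_castSucc]
    omega
  rw [this] at hsplit
  unfold tailSum
  linarith

lemma gt_filter_eq (i : Fin K) :
    ∑ j ∈ Finset.univ.filter (fun j => i.castSucc < j), h j * p0 j =
      tailSum (fun j => h j * p0 j) ((i : ℕ) + 1) := by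
  unfold tailSum
  refine Finset.sum_congr ?_ (fun _ _ => rfl)
  apply Finset.filter_congr
  intro j _
  rw [Fin.lt_def]
  simp only [Fin.coe_castSucc]
  omega

lemma tailSum_nonneg (hp0 : ∀ i, 0 ≤ p0 i) (m : ℕ) : 0 ≤ tailSum p0 m :=
  Finset.sum_nonneg (fun j _ => hp0 j)

lemma tailSum_eq_zero (hp0 : ∀ i, 0 ≤ p0 i) (m : ℕ) (hm : tailSum p0 m = 0) :
    tailSum (fun j => h j * p0 j) m = 0 := by
  unfold tailSum at *
  have hz := (Finset.sum_eq_zero_iff_of_nonneg (fun j _ => hp0 j)).mp hm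
  apply Finset.sum_eq_zero
  intro j hj
  rw [hz j hj, mul_zero]

lemma step_algebra (a b r t : ℝ) (ha0 : 0 ≤ a) (hr0 : 0 ≤ r) (htz : r = 0 → t = 0) :
    (a * r / (a + r)) * (b - t / r) ^ 2 =
      b ^ 2 * a + (t ^ 2 / r - (b * a + t) ^ 2 / (a + r)) := by
  rcases eq_or_lt_of_le hr0 with hrz | hrpos
  · rw [htz hrz.symm, ← hrz]
    rcases eq_or_ne a 0 with haz | haz
    · simp [haz]
    · simp only [div_zero, mul_zero, zero_div, add_zero, zero_mul, sub_zero]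
      rw [ne_comm] at haz
      field_simp
      ring
  · have har : a + r ≠ 0 := by positivity
    have hrne : r ≠ 0 := ne_of_gt hrpos
    field_simp
    ring

/-- `W m = T(m)²/R(m)`, the telescoping potential. -/
noncomputable def Wfun (p0 h : Fin (K + 1) → ℝ) (m : ℕ) : ℝ :=
  (tailSum (fun j => h j * p0 j) m) ^ 2 / tailSum p0 m

lemma variance_identity (hp0 : ∀ i, 0 ≤ p0 i) (hp1 : ∑ i, p0 i = 1) :
    ∑ i : Fin K, gammaCoef p0 i * (cCoef p0 h i) ^ 2 =
      ∑ a, p0 a * (h a - ∑ b, p0 b * h b) ^ 2 := by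
  have step : ∀ i : Fin K, gammaCoef p0 i * (cCoef p0 h i) ^ 2 =
      h i.castSucc ^ 2 * p0 i.castSucc +
        (Wfun p0 h ((i : ℕ) + 1) - Wfun p0 h (i : ℕ)) := by
    intro i
    have hγ : gammaCoef p0 i =
        p0 i.castSucc * tailSum p0 ((i : ℕ) + 1) /
          (p0 i.castSucc + tailSum p0 ((i : ℕ) + 1)) := by
      unfold gammaCoef
      rw [one_sub_le_filter p0 hp1 i, one_sub_lt_filter p0 hp1 i, tailSum_succ p0 i]
    have hc : cCoef p0 h i = h i.castSucc -
        tailSum (fun j => h j * p0 j) ((i : ℕ) + 1) / tailSum p0 ((i : ℕ) + 1) := by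
      unfold cCoef
      rw [one_sub_le_filter p0 hp1 i, gt_filter_eq p0 h i]
    have hWi : Wfun p0 h (i : ℕ) =
        (h i.castSucc * p0 i.castSucc + tailSum (fun j => h j * p0 j) ((i : ℕ) + 1)) ^ 2 /
          (p0 i.castSucc + tailSum p0 ((i : ℕ) + 1)) := by
      unfold Wfun
      rw [tailSum_succ p0 i, tailSum_succ (fun j => h j * p0 j) i]
    rw [hγ, hc, hWi]
    unfold Wfun
    exact step_algebra (p0 i.castSucc) (h i.castSucc)
      (tailSum p0 ((i : ℕ) + 1)) (tailSum (fun j => h j * p0 j) ((i : ℕ) + 1))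
      (hp0 _) (tailSum_nonneg p0 hp0 _) (tailSum_eq_zero p0 h hp0 _)
  rw [Finset.sum_congr rfl (fun i _ => step i), Finset.sum_add_distrib]
  have htel : ∑ i : Fin K, (Wfun p0 h ((i : ℕ) + 1) - Wfun p0 h (i : ℕ)) =
      Wfun p0 h K - Wfun p0 h 0 := by
    rw [Fin.sum_univ_eq_sum_range (fun m => Wfun p0 h (m + 1) - Wfun p0 h m) K,
      Finset.sum_range_sub]
  rw [htel]
  have hVK : Wfun p0 h K = h (Fin.last K) ^ 2 * p0 (Fin.last K) := by
    unfold Wfun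
    rw [tailSum_last, tailSum_last]
    rcases eq_or_ne (p0 (Fin.last K)) 0 with hz | hz
    · simp [hz]
    · field_simp
  have hV0 : Wfun p0 h 0 = (∑ b, p0 b * h b) ^ 2 := by
    unfold Wfun
    rw [tailSum_zero, tailSum_zero, hp1, div_one]
    congr 1
    exact Finset.sum_congr rfl (fun j _ => mul_comm _ _)
  rw [hVK, hV0]
  have hsum : ∑ i : Fin K, h i.castSucc ^ 2 * p0 i.castSucc +
      h (Fin.last K) ^ 2 * p0 (Fin.last K) = ∑ a, h a ^ 2 * p0 a := by
    rw [Fin.sum_univ_castSucc (f := fun a => h a ^ 2 * p0 a)]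
  have hrhs : ∑ a, p0 a * (h a - ∑ b, p0 b * h b) ^ 2 =
      ∑ a, h a ^ 2 * p0 a - (∑ b, p0 b * h b) ^ 2 := by
    set μ := ∑ b, p0 b * h b with hμ
    have expand : ∀ a, p0 a * (h a - μ) ^ 2 =
        h a ^ 2 * p0 a - (2 * μ * (p0 a * h a) - μ ^ 2 * p0 a) := by
      intro a; ring
    rw [Finset.sum_congr rfl (fun a _ => expand a)]
    rw [Finset.sum_sub_distrib, Finset.sum_sub_distrib, ← Finset.mul_sum, ← Finset.mul_sum,
      hp1, ← hμ, mul_one]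
    ring
  rw [hrhs]
  linarith
end VarId

set_option maxHeartbeats 4000000 in
lemma tail_le_eps {K n : ℕ} (π g : Fin (K + 1) → ℝ) (hπ0 : ∀ a, 0 ≤ π a)
    (hπ1 : ∑ a, π a = 1) (D δ δ1 δ2 ε' : ℝ) (hD : 0 < D)
    (hgD : ∀ a, g a - ∑ b, π b * g b ≤ D)
    (hε'0 : 0 < ε') (hε'2 : ε' < 2)
    (hδ10 : 0 ≤ δ1) (hδ20 : 0 < δ2) (hδa : δ1 ≤ δ) (hδb : δ2 ≤ δ)
    (hc1 : 4 * Real.log (2 / ε') * (∑ a, π a * (g a - ∑ b, π b * g b) ^ 2) ≤ (n : ℝ) * δ1 ^ 2)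
    (hc2 : 2 * Real.log (2 / ε') * D ≤ (n : ℝ) * δ2) :
    iidPr (n := n) π (fun ω => (n : ℝ) * (∑ b, π b * g b) + (n : ℝ) * δ < ∑ j, g (ω j)) ≤
      ε' / 2 := by
  set μ := ∑ b, π b * g b with hμ
  set v := ∑ a, π a * (g a - μ) ^ 2 with hv
  set E := Real.log (2 / ε') with hE
  have hE0 : 0 < E := Real.log_pos (by rw [lt_div_iff₀ hε'0]; linarith)
  have hv0 : 0 ≤ v := Finset.sum_nonneg (fun a _ => mul_nonneg (hπ0 a) (sq_nonneg _))
  have hδ0 : 0 < δ := lt_of_lt_of_le hδ20 hδb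
  have hexpE : Real.exp (-E) = ε' / 2 := by
    rw [Real.exp_neg, hE, Real.exp_log (by positivity), inv_div]
  rcases le_or_gt (D * δ) (2 * v) with hcase | hcase
  · -- small deviation regime: λ = δ/(2v)
    have hvpos : 0 < v := by nlinarith
    have hlam0 : 0 ≤ δ / (2 * v) := by positivity
    have hb : ∀ a, (δ / (2 * v)) * (g a - μ) ≤ 1 := by
      intro a
      have h1 : (δ / (2 * v)) * (g a - μ) ≤ (δ / (2 * v)) * D :=
        mul_le_mul_of_nonneg_left (hgD a) hlam0
      have h2 : (δ / (2 * v)) * D ≤ 1 := by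
        rw [div_mul_eq_mul_div, div_le_one (by positivity)]
        nlinarith
      linarith
    refine le_trans (chernoff π hπ0 hπ1 g (δ / (2 * v)) δ hlam0 hb) ?_
    have heq : (n : ℝ) * ((δ / (2 * v)) ^ 2 * v - (δ / (2 * v)) * δ) =
        -((n : ℝ) * δ ^ 2 / (4 * v)) := by
      field_simp
      ring
    rw [heq]
    have h3 : E ≤ (n : ℝ) * δ ^ 2 / (4 * v) := by
      rw [le_div_iff₀ (by positivity)]
      have h4 : δ1 ^ 2 ≤ δ ^ 2 := pow_le_pow_left₀ hδ10 hδa 2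
      nlinarith
    calc Real.exp (-((n : ℝ) * δ ^ 2 / (4 * v))) ≤ Real.exp (-E) :=
          Real.exp_le_exp.mpr (by linarith)
      _ = ε' / 2 := hexpE
  · -- large deviation regime: λ = 1/D
    have hlam0 : 0 ≤ 1 / D := by positivity
    have hb : ∀ a, (1 / D) * (g a - μ) ≤ 1 := by
      intro a
      have h1 : (1 / D) * (g a - μ) ≤ (1 / D) * D :=
        mul_le_mul_of_nonneg_left (hgD a) hlam0
      rw [one_div_mul_cancel (ne_of_gt hD)] at h1
      exact h1
    refine le_trans (chernoff π hπ0 hπ1 g (1 / D) δ hlam0 hb) ?_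
    have h2 : (n : ℝ) * ((1 / D) ^ 2 * v - (1 / D) * δ) ≤ -((n : ℝ) * δ / (2 * D)) := by
      have h3 : (1 / D) ^ 2 * v - (1 / D) * δ ≤ -(δ / (2 * D)) := by
        rw [div_pow, one_pow]
        rw [div_mul_eq_mul_div, one_div_mul_eq_div]
        rw [sub_le_iff_le_add]
        rw [div_le_iff₀ (by positivity)]
        have : (-(δ / (2 * D)) + δ / D) * D ^ 2 = δ * D / 2 := by
          field_simp
          ring
        rw [this]
        nlinarith
      have hn0 : (0 : ℝ) ≤ n := Nat.cast_nonneg n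
      calc (n : ℝ) * ((1 / D) ^ 2 * v - (1 / D) * δ) ≤ (n : ℝ) * (-(δ / (2 * D))) :=
            mul_le_mul_of_nonneg_left h3 hn0
        _ = -((n : ℝ) * δ / (2 * D)) := by ring
    have h4 : E ≤ (n : ℝ) * δ / (2 * D) := by
      rw [le_div_iff₀ (by positivity)]
      have h5 : (n : ℝ) * δ2 ≤ (n : ℝ) * δ :=
        mul_le_mul_of_nonneg_left hδb (Nat.cast_nonneg n)
      nlinarith
    calc Real.exp ((n : ℝ) * ((1 / D) ^ 2 * v - (1 / D) * δ))
        ≤ Real.exp (-E) := Real.exp_le_exp.mpr (by linarith)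
      _ = ε' / 2 := hexpE

set_option maxHeartbeats 4000000 in
/-- Completeness of the parameter-estimation test: in an honest i.i.d. implementation
with distribution `p₀`, the probability that
`|f^PE(freq) − f^PE(p₀)| > δ^tol_PE` is at most `ε_c`; hence the probability of
aborting at parameter estimation (`f^PE(freq) < f^PE(p₀) − δ^tol_PE`) is at most `ε_c`. -/
theorem parameter_estimation_completeness {K n : ℕ} (hn : 0 < n)
    (p0 : Fin (K + 1) → ℝ) (hp0 : ∀ i, 0 ≤ p0 i) (hp1 : ∑ i, p0 i = 1)
    (h : Fin (K + 1) → ℝ) (εc : ℝ) (hεc0 : 0 < εc) (hεc1 : εc < 1) :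
    iidPr (n := n) p0 (fun ω =>
        |fPE h (freq ω) - fPE h p0| > deltaTolPE (K := K) n p0 h εc) ≤ εc ∧
    iidPr (n := n) p0 (fun ω =>
        fPE h (freq ω) < fPE h p0 - deltaTolPE (K := K) n p0 h εc) ≤ εc := by
  classical
  have hn' : (0 : ℝ) < n := Nat.cast_pos.mpr hn
  set D := Dspread h with hDdef
  set δ := deltaTolPE (K := K) n p0 h εc with hδdef
  set μ := ∑ b, p0 b * h b with hμdef
  have hfPEp0 : fPE h p0 = μ := Finset.sum_congr rfl (fun a _ => mul_comm _ _)
  set v := ∑ a, p0 a * (h a - μ) ^ 2 with hvdef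
  have hvar : ∑ i : Fin K, gammaCoef p0 i * (cCoef p0 h i) ^ 2 = v :=
    variance_identity p0 h hp0 hp1
  have hv0 : 0 ≤ v :=
    Finset.sum_nonneg (fun a _ => mul_nonneg (hp0 a) (sq_nonneg _))
  have hD0 : 0 ≤ D := Dspread_nonneg h
  set L := Real.logb 2 ((n : ℝ) / εc) with hLdef
  set L2 := Real.logb 2 (2 / εc) with hL2def
  have hL0 : 0 ≤ L := by
    apply Real.logb_nonneg one_lt_two
    rw [le_div_iff₀ hεc0]
    have h1 : (1 : ℝ) ≤ n := Nat.one_le_cast.mpr hn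
    linarith
  have hL2gt1 : 1 < L2 := by
    have h2 : (2 : ℝ) < 2 / εc := by
      rw [lt_div_iff₀ hεc0]; linarith
    calc (1 : ℝ) = Real.logb 2 2 := (Real.logb_self_eq_one (by norm_num)).symm
      _ < L2 := Real.logb_lt_logb (by norm_num) (by norm_num) h2
  have hL2pos : 0 < L2 := by linarith
  set δ1 := 2 * Real.sqrt (L * (v / (n : ℝ))) with hδ1def
  set δ2 := 3 * D / (n : ℝ) * L2 with hδ2def
  have hδeq : δ = δ1 + δ2 := by
    rw [hδdef]
    unfold deltaTolPE
    rw [← Finset.sum_div, hvar]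
  have hδ10 : 0 ≤ δ1 := by
    rw [hδ1def]; positivity
  have hδ20 : 0 ≤ δ2 := by
    rw [hδ2def]
    exact mul_nonneg (div_nonneg (by linarith) hn'.le) hL2pos.le
  have hδ0 : 0 ≤ δ := by rw [hδeq]; linarith
  suffices habs : iidPr (n := n) p0 (fun ω => |fPE h (freq ω) - fPE h p0| > δ) ≤ εc by
    refine ⟨habs, le_trans (iidPr_mono p0 hp0 ?_) habs⟩
    intro ω hω
    have h3 : δ < fPE h p0 - fPE h (freq ω) := by linarith
    calc δ < fPE h p0 - fPE h (freq ω) := h3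
      _ ≤ |fPE h (freq ω) - fPE h p0| := by
          rw [abs_sub_comm]; exact le_abs_self _
  rcases le_or_gt D δ2 with hA | hB
  · -- the event is impossible since |diff| ≤ D ≤ δ₂ ≤ δ
    have hempty : ∀ ω : Fin n → Fin (K + 1),
        ¬ (|fPE h (freq ω) - fPE h p0| > δ) := by
      intro ω hcon
      have hbd := fPE_diff_le h (freq ω) p0 (freq_nonneg ω) (freq_sum hn ω) hp0 hp1
      rw [← hDdef] at hbd
      rw [hδeq] at hcon
      linarith
    rw [iidPr_eq_zero p0 hempty]
    exact hεc0.le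
  · -- Chernoff regime: D > 0 and n > 3L₂
    have hDpos : 0 < D := by
      rcases eq_or_lt_of_le hD0 with hz | hz
      · exfalso
        have hz2 : δ2 = 0 := by rw [hδ2def, ← hz]; ring
        rw [hz2] at hB; rw [← hz] at hB; exact lt_irrefl 0 hB
      · exact hz
    have hδ2pos : 0 < δ2 := by
      rw [hδ2def]
      exact mul_pos (div_pos (by linarith) hn') hL2pos
    have hn3 : 3 * L2 < (n : ℝ) := by
      have h5 : (3 * D / (n : ℝ) * L2) * n < D * n :=
        mul_lt_mul_of_pos_right hB hn'
      have h4 : 3 * D * L2 < D * (n : ℝ) := by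
        calc 3 * D * L2 = (3 * D / (n : ℝ) * L2) * n := by field_simp
          _ < D * n := h5
      have h6 : D * (3 * L2) < D * (n : ℝ) := by linarith
      exact (mul_lt_mul_iff_right₀ hDpos).mp h6
    have hn2 : (2 : ℝ) ≤ (n : ℝ) := by linarith
    set E := Real.log (2 / εc) with hEdef
    have hE0 : 0 < E := Real.log_pos (by rw [lt_div_iff₀ hεc0]; linarith)
    have hln2pos : 0 < Real.log 2 := Real.log_pos one_lt_two
    have hln2lt : Real.log 2 < 1 := by
      have := Real.log_two_lt_d9; linarith
    have hEleL : E ≤ L := by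
      have h7 : E ≤ Real.log ((n : ℝ) / εc) := by
        apply Real.log_le_log (by positivity)
        exact (div_le_div_iff_of_pos_right hεc0).mpr hn2
      have hx0 : 0 ≤ Real.log ((n : ℝ) / εc) := Real.log_nonneg (by
        rw [le_div_iff₀ hεc0]
        linarith)
      have h8 : Real.log ((n : ℝ) / εc) ≤ L := by
        rw [hLdef, ← Real.log_div_log, le_div_iff₀ hln2pos]
        have h8a := mul_le_mul_of_nonneg_left hln2lt.le hx0
        linarith
      linarith
    have hc1 : 4 * E * v ≤ (n : ℝ) * δ1 ^ 2 := by
      have hsq : (n : ℝ) * δ1 ^ 2 = 4 * L * v := by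
        rw [hδ1def, mul_pow, Real.sq_sqrt (mul_nonneg hL0 (div_nonneg hv0 hn'.le))]
        field_simp
        ring
      rw [hsq]
      linarith [mul_le_mul_of_nonneg_right hEleL hv0]
    have hc2 : 2 * E * D ≤ (n : ℝ) * δ2 := by
      have h9 : (n : ℝ) * δ2 = 3 * D * L2 := by
        rw [hδ2def]; field_simp
      have hL2E : L2 = E / Real.log 2 := by
        rw [hL2def, hEdef, ← Real.log_div_log]
      have h10 : 2 * E * D * Real.log 2 ≤ 3 * D * E := by
        have hED : 0 ≤ E * D := mul_nonneg hE0.le hD0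
        have h10a := mul_le_mul_of_nonneg_left hln2lt.le hED
        have h10b : E * D * Real.log 2 ≤ E * D := by linarith [h10a]
        linarith [hED, h10b]
      calc 2 * E * D = (2 * E * D * Real.log 2) / Real.log 2 := by field_simp
        _ ≤ (3 * D * E) / Real.log 2 := by
            apply div_le_div_of_nonneg_right h10 hln2pos.le
        _ = 3 * D * (E / Real.log 2) := by ring
        _ = 3 * D * L2 := by rw [hL2E]
        _ = (n : ℝ) * δ2 := h9.symm
    have hDS : ∀ a b : Fin (K + 1), h a - h b ≤ D :=
      fun a b => le_trans (le_abs_self _) (abs_sub_le_Dspread h a b)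
    have hgDh : ∀ a, h a - ∑ b, p0 b * h b ≤ D :=
      sub_mean_le p0 h hp0 hp1 D hDS
    have hgDneg : ∀ a : Fin (K + 1), -h a - ∑ b, p0 b * -h b ≤ D := by
      apply sub_mean_le p0 (fun a => -h a) hp0 hp1 D
      intro a b
      have := hDS b a
      show -h a - -h b ≤ D
      linarith
    have hmneg : ∑ b, p0 b * -h b = -μ := by
      rw [hμdef, ← Finset.sum_neg_distrib]
      exact Finset.sum_congr rfl (fun b _ => by ring)
    have hvneg : ∑ a, p0 a * (-h a - ∑ b, p0 b * -h b) ^ 2 = v := by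
      rw [hmneg, hvdef]
      exact Finset.sum_congr rfl (fun a _ => by ring)
    have hc1neg : 4 * E * (∑ a, p0 a * (-h a - ∑ b, p0 b * -h b) ^ 2) ≤
        (n : ℝ) * δ1 ^ 2 := by
      rw [hvneg]; exact hc1
    have hεc2 : εc < 2 := by linarith
    have hδa : δ1 ≤ δ := by rw [hδeq]; linarith
    have hδb : δ2 ≤ δ := by rw [hδeq]; linarith
    have htail1 := tail_le_eps (n := n) p0 h hp0 hp1 D δ δ1 δ2 εc hDpos hgDh
      hεc0 hεc2 hδ10 hδ2pos hδa hδb (by rw [← hEdef, ← hμdef, ← hvdef]; exact hc1)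
      (by rw [← hEdef]; exact hc2)
    have htail2 := tail_le_eps (n := n) p0 (fun a => -h a) hp0 hp1 D δ δ1 δ2 εc hDpos
      hgDneg hεc0 hεc2 hδ10 hδ2pos hδa hδb (by rw [← hEdef]; exact hc1neg)
      (by rw [← hEdef]; exact hc2)
    have himp : ∀ ω : Fin n → Fin (K + 1), |fPE h (freq ω) - fPE h p0| > δ →
        ((n : ℝ) * (∑ b, p0 b * h b) + (n : ℝ) * δ < ∑ j, h (ω j)) ∨
        ((n : ℝ) * (∑ b, p0 b * -h b) + (n : ℝ) * δ < ∑ j, -h (ω j)) := by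
      intro ω hω
      have hf : fPE h (freq ω) = (∑ j, h (ω j)) / n := fPE_freq h ω
      rw [hfPEp0] at hω
      rcases lt_abs.mp hω with hca | hcb
      · left
        have h11 : μ + δ < (∑ j, h (ω j)) / n := by rw [← hf]; linarith
        have h12 := (lt_div_iff₀ hn').mp h11
        rw [← hμdef]
        linarith
      · right
        have h13 : (∑ j, h (ω j)) / n < μ - δ := by rw [← hf]; linarith
        have h14 := (div_lt_iff₀ hn').mp h13
        have hsneg : ∑ j, -h (ω j) = -∑ j, h (ω j) := Finset.sum_neg_distrib _
        rw [hsneg, hmneg]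
        linarith
    calc iidPr (n := n) p0 (fun ω => |fPE h (freq ω) - fPE h p0| > δ)
        ≤ iidPr (n := n) p0 (fun ω =>
            ((n : ℝ) * (∑ b, p0 b * h b) + (n : ℝ) * δ < ∑ j, h (ω j)) ∨
            ((n : ℝ) * (∑ b, p0 b * -h b) + (n : ℝ) * δ < ∑ j, -h (ω j))) :=
          iidPr_mono p0 hp0 himp
      _ ≤ iidPr (n := n) p0 (fun ω =>
            (n : ℝ) * (∑ b, p0 b * h b) + (n : ℝ) * δ < ∑ j, h (ω j)) +
          iidPr (n := n) p0 (fun ω =>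
            (n : ℝ) * (∑ b, p0 b * -h b) + (n : ℝ) * δ < ∑ j, -h (ω j)) :=
          iidPr_union p0 hp0 _ _
      _ ≤ εc / 2 + εc / 2 := add_le_add htail1 htail2
      _ = εc := by ring

end
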